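/- Let R = k'[[x₁,…,x_n]] with maximal ideal M, let G = ⊕ I_k W^k ⊆ R[W] be a graded subalgebra generated by elements g_{n_i} W^{n_i} (i=1,…,m, each n_i ≥ 1), and let G' be the graded subalgebra generated by all Δ^α(g_{n_i}) W^{n_i−|α|} for 0 ≤ |α| < n_i. Then the Sing condition (ord(I_k) ≥ k for all k) holds for G if and only if it holds for G'. -/

import Mathlib

/-- The Taylor-expansion operator `Δ^α` on `R = k'[[x₁,…,x_n]]`:
`Δ^α f` is the coefficient of `T^α` in `Tay f`, where `Tay : R → R[[T₁,…,T_n]]`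
is the continuous `k'`-algebra homomorphism sending `x_i ↦ x_i + T_i`.
Explicitly, the coefficient of `x^β` in `Δ^α f` is `(α+β choose α)`
times the coefficient of `x^{α+β}` in `f`. -/
noncomputable def Delta {k' : Type*} [CommRing k'] {n : ℕ} (a : Fin n →₀ ℕ)
    (f : MvPowerSeries (Fin n) k') : MvPowerSeries (Fin n) k' :=
  fun b => (∏ i, ((a + b) i).choose (a i)) • MvPowerSeries.coeff (a + b) f

section Aux

variable {k' : Type*} [CommRing k'] {N : ℕ}

private lemma st9_deg_add (u v : Fin N →₀ ℕ) :
    (∑ j, (u + v) j) = (∑ j, u j) + ∑ j, v j := by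
  simp [Finsupp.add_apply, Finset.sum_add_distrib]

/-- The ideal of power series of order ≥ k. -/
private def st9J (k' : Type*) [CommRing k'] (N k : ℕ) :
    Ideal (MvPowerSeries (Fin N) k') where
  carrier := {f | ∀ b : Fin N →₀ ℕ, (∑ j, b j) < k → MvPowerSeries.coeff b f = 0}
  add_mem' := fun hf hg b hb => by simp [map_add, hf b hb, hg b hb]
  zero_mem' := fun b _ => by simp
  smul_mem' := fun r f hf b hb => by
    classical
    rw [smul_eq_mul, MvPowerSeries.coeff_mul]
    refine Finset.sum_eq_zero fun p hp => ?_
    rw [Finset.HasAntidiagonal.mem_antidiagonal] at hp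
    have h2 : (∑ j, p.2 j) < k := by
      have := st9_deg_add p.1 p.2
      rw [hp] at this
      omega
    rw [hf p.2 h2, mul_zero]

private lemma mem_st9J {k : ℕ} {f : MvPowerSeries (Fin N) k'} :
    f ∈ st9J k' N k ↔ ∀ b : Fin N →₀ ℕ, (∑ j, b j) < k → MvPowerSeries.coeff b f = 0 :=
  Iff.rfl

private lemma st9J_mul_mem {a c : ℕ} {f g : MvPowerSeries (Fin N) k'}
    (hf : f ∈ st9J k' N a) (hg : g ∈ st9J k' N c) : f * g ∈ st9J k' N (a + c) := by
  classical
  rw [mem_st9J]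
  intro b hb
  rw [MvPowerSeries.coeff_mul]
  refine Finset.sum_eq_zero fun p hp => ?_
  rw [Finset.HasAntidiagonal.mem_antidiagonal] at hp
  have hsum : (∑ j, p.1 j) + (∑ j, p.2 j) = ∑ j, b j := by
    rw [← st9_deg_add, hp]
  rcases lt_or_ge (∑ j, p.1 j) a with h | h
  · rw [hf p.1 h, zero_mul]
  · rw [hg p.2 (by omega), mul_zero]

private lemma st9_pow_le (k : ℕ) :
    (Ideal.span (Set.range (MvPowerSeries.X : Fin N → MvPowerSeries (Fin N) k'))) ^ k ≤
      st9J k' N k := by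
  induction k with
  | zero => intro f _; rw [mem_st9J]; intro b hb; exact absurd hb (Nat.not_lt_zero _)
  | succ k ih =>
    rw [pow_succ]
    refine Ideal.mul_le.2 fun f hf g hg => ?_
    have hspan : Ideal.span (Set.range (MvPowerSeries.X : Fin N → MvPowerSeries (Fin N) k')) ≤
        st9J k' N 1 := by
      rw [Ideal.span_le]
      rintro _ ⟨s, rfl⟩
      rw [SetLike.mem_coe, mem_st9J]
      intro b hb
      have hb0 : b = 0 := by
        ext j
        have := Finset.sum_eq_zero_iff.1 (Nat.lt_one_iff.1 hb) j (Finset.mem_univ j)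
        simpa using this
      subst hb0
      simp [MvPowerSeries.coeff_zero_X]
    exact st9J_mul_mem (ih hf) (hspan hg)

private lemma st9_exists_le (k : ℕ) (b : Fin N →₀ ℕ) (h : k ≤ ∑ j, b j) :
    ∃ c : Fin N →₀ ℕ, c ≤ b ∧ (∑ j, c j) = k := by
  induction k with
  | zero => exact ⟨0, zero_le, by simp⟩
  | succ k ih =>
    obtain ⟨c, hcb, hc⟩ := ih (Nat.le_of_succ_le h)
    have hex : ∃ j, c j < b j := by
      by_contra hne
      push_neg at hne
      have : (∑ j, b j) ≤ ∑ j, c j := Finset.sum_le_sum fun j _ => hne j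
      omega
    obtain ⟨j, hj⟩ := hex
    refine ⟨c + Finsupp.single j 1, ?_, ?_⟩
    · rw [Finsupp.le_def]
      intro j'
      rcases eq_or_ne j' j with rfl | hne
      · simp only [Finsupp.add_apply, Finsupp.single_eq_same]
        omega
      · simp only [Finsupp.add_apply, Finsupp.single_eq_of_ne' (Ne.symm hne), add_zero]
        exact Finsupp.le_def.1 hcb j'
    · rw [st9_deg_add, hc]
      have : (∑ j', (Finsupp.single j 1) j') = 1 := by
        rw [Finset.sum_eq_single j (fun j' _ hne => Finsupp.single_eq_of_ne' (Ne.symm hne))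
          (fun h => absurd (Finset.mem_univ j) h)]
        simp
      omega

private lemma st9_deg_mono {c b : Fin N →₀ ℕ} (h : c ≤ b) : (∑ j, c j) ≤ ∑ j, b j :=
  Finset.sum_le_sum fun j _ => Finsupp.le_def.1 h j

private lemma st9_monomial_mem (c : Fin N →₀ ℕ) :
    MvPowerSeries.monomial c 1 ∈
      (Ideal.span (Set.range (MvPowerSeries.X : Fin N → MvPowerSeries (Fin N) k'))) ^
        (∑ j, c j) := by
  induction c using Finsupp.induction with
  | zero => simp [Ideal.one_eq_top]
  | single_add a n f _ _ ih =>
    have hdeg : (∑ j, (Finsupp.single a n + f) j) = n + ∑ j, f j := by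
      rw [st9_deg_add]
      congr 1
      rw [Finset.sum_eq_single a (fun j' _ hne => Finsupp.single_eq_of_ne' (Ne.symm hne))
        (fun h => absurd (Finset.mem_univ a) h)]
      simp
    have hmon : (MvPowerSeries.monomial (Finsupp.single a n + f) 1 :
        MvPowerSeries (Fin N) k') =
        (MvPowerSeries.X a) ^ n * MvPowerSeries.monomial f 1 := by
      rw [MvPowerSeries.X_pow_eq, MvPowerSeries.monomial_mul_monomial, one_mul]
    rw [hdeg, hmon, pow_add]
    exact Ideal.mul_mem_mul
      (Ideal.pow_mem_pow (Ideal.subset_span (Set.mem_range_self a)) n) ih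

private lemma st9J_le_pow (k : ℕ) :
    st9J k' N k ≤
      (Ideal.span (Set.range (MvPowerSeries.X : Fin N → MvPowerSeries (Fin N) k'))) ^ k := by
  classical
  intro f hf
  set tau : (Fin N →₀ ℕ) → (Fin N →₀ ℕ) := fun b =>
    if h : k ≤ ∑ j, b j then (st9_exists_le k b h).choose else 0 with htau
  have htau_le : ∀ b, k ≤ ∑ j, b j → tau b ≤ b := by
    intro b h
    rw [htau]
    simp only [dif_pos h]
    exact (st9_exists_le k b h).choose_spec.1
  have htau_deg : ∀ b, k ≤ ∑ j, b j → (∑ j, tau b j) = k := by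
    intro b h
    rw [htau]
    simp only [dif_pos h]
    exact (st9_exists_le k b h).choose_spec.2
  set D : Finset (Fin N →₀ ℕ) :=
    (Finset.Iic (Finsupp.equivFunOnFinite.symm fun _ => k)).filter
      (fun c => (∑ j, c j) = k) with hD
  have hmemD : ∀ c : Fin N →₀ ℕ, (∑ j, c j) = k → c ∈ D := by
    intro c hc
    rw [hD, Finset.mem_filter, Finset.mem_Iic]
    refine ⟨Finsupp.le_def.2 fun j => ?_, hc⟩
    have : c j ≤ ∑ j', c j' := Finset.single_le_sum (fun _ _ => Nat.zero_le _)
      (Finset.mem_univ j)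
    simpa [hc] using this
  set hfun : (Fin N →₀ ℕ) → MvPowerSeries (Fin N) k' := fun c d =>
    if tau (c + d) = c then MvPowerSeries.coeff (c + d) f else 0 with hhfun
  have key : f = ∑ c ∈ D, MvPowerSeries.monomial c 1 * hfun c := by
    apply MvPowerSeries.ext
    intro b
    rw [map_sum]
    by_cases hb : k ≤ ∑ j, b j
    · have hterm : ∀ c ∈ D,
          MvPowerSeries.coeff b (MvPowerSeries.monomial c 1 * hfun c) =
            if c = tau b then MvPowerSeries.coeff b f else 0 := by
        intro c hc
        by_cases hcb : c ≤ b
        · rw [MvPowerSeries.coeff_monomial_mul, if_pos hcb, one_mul]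
          have hcoeff : MvPowerSeries.coeff (b - c) (hfun c) = hfun c (b - c) := rfl
          rw [hcoeff, hhfun]
          simp only
          rw [add_tsub_cancel_of_le hcb]
          simp [eq_comm]
        · have hne : c ≠ tau b := fun hc' => hcb (hc' ▸ htau_le b hb)
          rw [MvPowerSeries.coeff_monomial_mul, if_neg hcb, if_neg hne]
      rw [Finset.sum_congr rfl hterm, Finset.sum_ite_eq' D (tau b)
        (fun _ => MvPowerSeries.coeff b f), if_pos (hmemD _ (htau_deg b hb))]
    · have hzero : ∀ c ∈ D,
          MvPowerSeries.coeff b (MvPowerSeries.monomial c 1 * hfun c) = 0 := by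
        intro c hc
        have hck : (∑ j, c j) = k := (Finset.mem_filter.1 hc).2
        rw [MvPowerSeries.coeff_monomial_mul, if_neg]
        intro hcb
        exact hb (hck ▸ st9_deg_mono hcb)
      rw [Finset.sum_eq_zero hzero, hf b (lt_of_not_ge hb)]
  rw [key]
  refine Submodule.sum_mem _ fun c hc => ?_
  have hck : (∑ j, c j) = k := (Finset.mem_filter.1 hc).2
  exact Ideal.mul_mem_right _ _ (hck ▸ st9_monomial_mem c)

private lemma st9_coeff_Delta (a b : Fin N →₀ ℕ) (f : MvPowerSeries (Fin N) k') :
    MvPowerSeries.coeff b (Delta a f) =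
      (∏ i, ((a + b) i).choose (a i)) • MvPowerSeries.coeff (a + b) f :=
  rfl

private lemma st9_Delta_zero (f : MvPowerSeries (Fin N) k') : Delta 0 f = f := by
  apply MvPowerSeries.ext
  intro b
  rw [st9_coeff_Delta]
  simp

private lemma st9_Delta_mem {k : ℕ} {f : MvPowerSeries (Fin N) k'} (a : Fin N →₀ ℕ)
    (hf : f ∈ st9J k' N k) : Delta a f ∈ st9J k' N (k - ∑ j, a j) := by
  rw [mem_st9J]
  intro b hb
  rw [st9_coeff_Delta, hf (a + b) (by rw [st9_deg_add]; omega), smul_zero]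

/-- The Rees-like subalgebra `⊕ M^k W^k`. -/
private def st9A (M : Ideal (MvPowerSeries (Fin N) k')) :
    Subalgebra (MvPowerSeries (Fin N) k') (Polynomial (MvPowerSeries (Fin N) k')) where
  carrier := {p | ∀ k, p.coeff k ∈ M ^ k}
  add_mem' := fun hp hq k => by
    rw [Polynomial.coeff_add]; exact add_mem (hp k) (hq k)
  mul_mem' := fun {p q} hp hq k => by
    rw [Polynomial.coeff_mul]
    refine Submodule.sum_mem _ fun x hx => ?_
    rw [Finset.HasAntidiagonal.mem_antidiagonal] at hx
    have := Ideal.mul_mem_mul (hp x.1) (hq x.2)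
    rwa [← pow_add, hx] at this
  one_mem' := fun k => by
    rw [Polynomial.coeff_one]
    split
    · rename_i h; subst h; simp [Ideal.one_eq_top]
    · exact zero_mem _
  zero_mem' := fun k => by simp
  algebraMap_mem' := fun r k => by
    rw [Polynomial.algebraMap_eq, Polynomial.coeff_C]
    split
    · rename_i h; subst h; simp [Ideal.one_eq_top]
    · exact zero_mem _

private lemma mem_st9A {M : Ideal (MvPowerSeries (Fin N) k')}
    {p : Polynomial (MvPowerSeries (Fin N) k')} :
    p ∈ st9A M ↔ ∀ k, p.coeff k ∈ M ^ k :=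
  Iff.rfl

end Aux

open Polynomial

/-- over `R = k'[[x₁,…,x_n]]` with maximal ideal `M`, let `G ⊆ R[W]`
be generated by elements `g_i W^{n_i}` and `G'` by all `Δ^α(g_i) W^{n_i-|α|}`
with `|α| < n_i`.  Then the singular condition (`I_k ⊆ M^k` for all `k ≥ 1`
for the graded pieces) holds for `G` iff it holds for `G'`. -/
theorem stmt9 {k' : Type*} [Field k'] {N : ℕ}
    (M : Ideal (MvPowerSeries (Fin N) k'))
    (hM : M = Ideal.span (Set.range (MvPowerSeries.X : Fin N → MvPowerSeries (Fin N) k')))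
    {m : ℕ} (g : Fin m → MvPowerSeries (Fin N) k') (w : Fin m → ℕ) (hw : ∀ i, 1 ≤ w i)
    (G G' : Subalgebra (MvPowerSeries (Fin N) k') (Polynomial (MvPowerSeries (Fin N) k')))
    (hG : G = Algebra.adjoin _ {p | ∃ i, p = C (g i) * X ^ (w i)})
    (hG' : G' = Algebra.adjoin _
      {p | ∃ (i : Fin m) (a : Fin N →₀ ℕ), (∑ j, a j) < w i ∧
        p = C (Delta a (g i)) * X ^ (w i - ∑ j, a j)}) :
    (∀ k, 1 ≤ k → ∀ c, C c * X ^ k ∈ G → c ∈ M ^ k) ↔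
      (∀ k, 1 ≤ k → ∀ c, C c * X ^ k ∈ G' → c ∈ M ^ k) := by
  constructor
  · intro hs k hk c hc
    have hA : G' ≤ st9A M := by
      rw [hG']
      apply Algebra.adjoin_le
      rintro p ⟨i, a, ha, rfl⟩
      rw [SetLike.mem_coe, mem_st9A]
      intro k0
      rw [coeff_C_mul_X_pow]
      split
      · rename_i h
        subst h
        have hgi : g i ∈ M ^ (w i) :=
          hs (w i) (hw i) (g i) (by rw [hG]; exact Algebra.subset_adjoin ⟨i, rfl⟩)
        have h1 : g i ∈ st9J k' N (w i) := by
          rw [hM] at hgi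
          exact st9_pow_le _ hgi
        rw [hM]
        exact st9J_le_pow _ (st9_Delta_mem a h1)
      · exact zero_mem _
    have := (hA hc) k
    rwa [coeff_C_mul_X_pow, if_pos rfl] at this
  · intro hs k hk c hc
    have hGG : G ≤ G' := by
      rw [hG, hG']
      apply Algebra.adjoin_mono
      rintro p ⟨i, rfl⟩
      exact ⟨i, 0, by simpa using Nat.lt_of_lt_of_le Nat.zero_lt_one (hw i), by rw [st9_Delta_zero]; simp⟩
    exact hs k hk c (hGG hc)
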